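/- Pre-Iwasawa factorization: let S ∈ Sp(2n,ℝ) have block form S = ((A,B),(C,D)) with n×n blocks. Then DᵀD + BᵀB is symmetric positive definite; setting L = (DᵀD + BᵀB)^{1/2} and Q = −(CᵀD + AᵀB)(DᵀD + BᵀB)^{−1/2}, there exist real n×n matrices U and V with U + iV a complex unitary matrix such that S⁻¹ = ((L, 0),(Q, L⁻¹)) · ((U, −V),(V, U)). -/

import Mathlib

open Matrix

noncomputable section

open scoped ComplexOrder in
/-- The positive semidefinite square root of a positive semidefinite matrix
(the definition removed from Mathlib, restored with its old meaning). -/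
def Matrix.PosSemidef.sqrt {m : Type*} [Fintype m] [DecidableEq m] {𝕜 : Type*} [RCLike 𝕜]
    {A : Matrix m m 𝕜} (hA : A.PosSemidef) : Matrix m m 𝕜 :=
  hA.1.eigenvectorUnitary.1 * diagonal ((↑) ∘ (√·) ∘ hA.1.eigenvalues) *
    (star hA.1.eigenvectorUnitary : Matrix m m 𝕜)

/-- The standard symplectic matrix `J = ((0, I), (-I, 0))`. -/
def stdJ (n : ℕ) : Matrix (Fin n ⊕ Fin n) (Fin n ⊕ Fin n) ℝ :=
  Matrix.fromBlocks 0 1 (-1) 0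

/-- A real `2n × 2n` matrix is symplectic if `Sᵀ J S = J`. -/
def IsSymplectic {n : ℕ} (S : Matrix (Fin n ⊕ Fin n) (Fin n ⊕ Fin n) ℝ) : Prop :=
  Sᵀ * stdJ n * S = stdJ n

theorem Matrix.PosSemidef.sqrt_mul_self_real {m : Type*} [Fintype m] [DecidableEq m]
    {A : Matrix m m ℝ} (hA : A.PosSemidef) : hA.sqrt * hA.sqrt = A := by
  have hU : (star hA.1.eigenvectorUnitary : Matrix m m ℝ) * hA.1.eigenvectorUnitary.1 = 1 :=
    Unitary.coe_star_mul_self _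
  have hd : diagonal ((↑) ∘ (√·) ∘ hA.1.eigenvalues) * diagonal ((↑) ∘ (√·) ∘ hA.1.eigenvalues)
      = diagonal (RCLike.ofReal ∘ hA.1.eigenvalues : m → ℝ) := by
    rw [diagonal_mul_diagonal]
    congr 1; funext i
    simp [Real.mul_self_sqrt (hA.eigenvalues_nonneg i)]
  conv_rhs => rw [hA.1.spectral_theorem, Unitary.conjStarAlgAut_apply]
  unfold Matrix.PosSemidef.sqrt
  calc _ = hA.1.eigenvectorUnitary.1 * diagonal ((↑) ∘ (√·) ∘ hA.1.eigenvalues) *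
      ((star hA.1.eigenvectorUnitary : Matrix m m ℝ) * hA.1.eigenvectorUnitary.1) *
      diagonal ((↑) ∘ (√·) ∘ hA.1.eigenvalues) * (star hA.1.eigenvectorUnitary : Matrix m m ℝ) := by
        simp only [mul_assoc]; rfl
    _ = _ := by rw [hU, mul_one, mul_assoc _ (diagonal _) (diagonal _), hd]

theorem Matrix.PosSemidef.sqrt_transpose_real {m : Type*} [Fintype m] [DecidableEq m]
    {A : Matrix m m ℝ} (hA : A.PosSemidef) : hA.sqrtᴴ = hA.sqrt := by
  unfold Matrix.PosSemidef.sqrt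
  rw [conjTranspose_mul, conjTranspose_mul, diagonal_conjTranspose, mul_assoc]
  simp
  rfl

/-- Pre-Iwasawa factorization: for a symplectic `S = ((A,B),(C,D))`, the matrix
`DᵀD + BᵀB` is positive definite, and with `L = (DᵀD + BᵀB)^{1/2}` and
`Q = -(CᵀD + AᵀB)(DᵀD + BᵀB)^{-1/2}` there are real matrices `U, V` with `U + iV`
unitary such that `S⁻¹ = ((L, 0), (Q, L⁻¹)) * ((U, -V), (V, U))`. -/
theorem pre_iwasawa_factorization {n : ℕ} (hn : 1 ≤ n)
    (S : Matrix (Fin n ⊕ Fin n) (Fin n ⊕ Fin n) ℝ) (hS : IsSymplectic S)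
    (A B C D : Matrix (Fin n) (Fin n) ℝ) (hblocks : S = Matrix.fromBlocks A B C D) :
    ∃ hP : (Dᵀ * D + Bᵀ * B).PosDef,
      ∃ U V : Matrix (Fin n) (Fin n) ℝ,
        star (U.map (Complex.ofReal) + Complex.I • V.map (Complex.ofReal)) *
            (U.map (Complex.ofReal) + Complex.I • V.map (Complex.ofReal)) = 1 ∧
        S⁻¹ = Matrix.fromBlocks hP.posSemidef.sqrt 0
            (-(Cᵀ * D + Aᵀ * B) * hP.posSemidef.sqrt⁻¹) hP.posSemidef.sqrt⁻¹ *
          Matrix.fromBlocks U (-V) V U := by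
  subst hblocks
  -- Extract the block identities from symplecticity
  unfold IsSymplectic stdJ at hS
  rw [Matrix.fromBlocks_transpose, Matrix.fromBlocks_multiply, Matrix.fromBlocks_multiply] at hS
  simp only [mul_zero, mul_one, mul_neg_one, zero_add, add_zero, neg_mul] at hS
  have e11 := congrArg Matrix.toBlocks₁₁ hS
  have e12 := congrArg Matrix.toBlocks₁₂ hS
  have e22 := congrArg Matrix.toBlocks₂₂ hS
  simp only [Matrix.toBlocks_fromBlocks₁₁, Matrix.toBlocks_fromBlocks₁₂,
    Matrix.toBlocks_fromBlocks₂₂] at e11 e12 e22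
  have h3 : Aᵀ * D - Cᵀ * B = 1 := by rw [← e12]; abel
  have h1 : Bᵀ * D = Dᵀ * B := by
    have h' : Bᵀ * D - Dᵀ * B = 0 := by rw [← e22]; abel
    exact sub_eq_zero.mp h'
  have h11 : Aᵀ * C = Cᵀ * A := by
    have h' : Aᵀ * C - Cᵀ * A = 0 := by rw [← e11]; abel
    exact sub_eq_zero.mp h'
  -- Positive definiteness of `DᵀD + BᵀB`
  have hP : (Dᵀ * D + Bᵀ * B).PosDef := by
    refine Matrix.PosDef.of_dotProduct_mulVec_pos ?_ ?_
    · show (Dᵀ * D + Bᵀ * B)ᴴ = _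
      rw [conjTranspose_eq_transpose_of_trivial]
      simp [Matrix.transpose_add, Matrix.transpose_mul]
    · intro x hx
      have hre : star x ⬝ᵥ ((Dᵀ * D + Bᵀ * B) *ᵥ x)
          = (D *ᵥ x) ⬝ᵥ (D *ᵥ x) + (B *ᵥ x) ⬝ᵥ (B *ᵥ x) := by
        rw [Matrix.add_mulVec, dotProduct_add, star_trivial]
        congr 1 <;>
          rw [← Matrix.mulVec_mulVec, Matrix.dotProduct_mulVec, Matrix.vecMul_transpose]
      have hD0 : 0 ≤ (D *ᵥ x) ⬝ᵥ (D *ᵥ x) := by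
        simp only [dotProduct]; exact Finset.sum_nonneg fun i _ => mul_self_nonneg _
      have hB0 : 0 ≤ (B *ᵥ x) ⬝ᵥ (B *ᵥ x) := by
        simp only [dotProduct]; exact Finset.sum_nonneg fun i _ => mul_self_nonneg _
      rw [hre]
      rcases lt_or_eq_of_le (add_nonneg hD0 hB0) with h | h
      · exact h
      · exfalso
        have hD : D *ᵥ x = 0 := dotProduct_self_eq_zero.mp (le_antisymm (by linarith) hD0)
        have hB : B *ᵥ x = 0 := dotProduct_self_eq_zero.mp (le_antisymm (by linarith) hB0)
        apply hx
        have hx1 : (Aᵀ * D - Cᵀ * B) *ᵥ x = x := by rw [h3, Matrix.one_mulVec]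
        rw [Matrix.sub_mulVec, ← Matrix.mulVec_mulVec, ← Matrix.mulVec_mulVec, hD, hB] at hx1
        simpa using hx1.symm
  set P := Dᵀ * D + Bᵀ * B with hPdef
  set L := hP.posSemidef.sqrt with hLdef
  have hLL : L * L = P := hP.posSemidef.sqrt_mul_self_real
  have hLh : Lᵀ = L := by
    have h : Lᴴ = L := hP.posSemidef.sqrt_transpose_real
    rwa [conjTranspose_eq_transpose_of_trivial] at h
  have hPdet : IsUnit P.det := hP.det_pos.ne'.isUnit
  have hLdet : IsUnit L.det := by
    have hd : L.det * L.det = P.det := by rw [← Matrix.det_mul, hLL]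
    exact isUnit_of_mul_isUnit_left (hd ▸ hPdet)
  have hL1 : L * L⁻¹ = 1 := Matrix.mul_nonsing_inv _ hLdet
  have hInv2 : L⁻¹ * L⁻¹ = P⁻¹ := by rw [← Matrix.mul_inv_rev, hLL]
  have hLinvT : (L⁻¹)ᵀ = L⁻¹ := by rw [Matrix.transpose_nonsing_inv, hLh]
  have hP1 : P * P⁻¹ = 1 := Matrix.mul_nonsing_inv _ hPdet
  -- the key identities (i) and (ii)
  have hkeys : D * (P⁻¹ * Dᵀ) + B * (P⁻¹ * Bᵀ) = 1 ∧ B * (P⁻¹ * Dᵀ) = D * (P⁻¹ * Bᵀ) := by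
    set R : Matrix (Fin n ⊕ Fin n) (Fin n ⊕ Fin n) ℝ := Matrix.fromBlocks D (-B) B D with hR
    set X : Matrix (Fin n ⊕ Fin n) (Fin n ⊕ Fin n) ℝ := Matrix.fromBlocks P⁻¹ 0 0 P⁻¹ with hX
    have hRtR : Rᵀ * R = Matrix.fromBlocks P 0 0 P := by
      rw [hR, Matrix.fromBlocks_transpose, Matrix.fromBlocks_multiply, hPdef]
      have hb12 : Dᵀ * -B + Bᵀ * D = 0 := by rw [mul_neg, h1]; exact neg_add_cancel _
      have hb21 : (-B)ᵀ * D + Dᵀ * B = 0 := by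
        rw [Matrix.transpose_neg, neg_mul, h1]; exact neg_add_cancel _
      have hb22 : (-B)ᵀ * -B + Dᵀ * D = Dᵀ * D + Bᵀ * B := by
        rw [Matrix.transpose_neg, neg_mul, mul_neg, neg_neg]; exact add_comm _ _
      rw [hb12, hb21, hb22]
    have hcomm : Rᵀ * (R * X) = 1 := by
      rw [← mul_assoc, hRtR, hX, Matrix.fromBlocks_multiply]
      simp [hP1, Matrix.fromBlocks_one]
    have hkey : R * X * Rᵀ = 1 := mul_eq_one_comm.mp hcomm
    rw [hR, hX, Matrix.fromBlocks_multiply, Matrix.fromBlocks_transpose,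
      Matrix.fromBlocks_multiply, ← Matrix.fromBlocks_one] at hkey
    simp only [mul_zero, zero_mul, add_zero, zero_add, Matrix.transpose_neg, mul_neg, neg_mul,
      neg_neg] at hkey
    have k11 := congrArg Matrix.toBlocks₁₁ hkey
    have k12 := congrArg Matrix.toBlocks₁₂ hkey
    simp only [Matrix.toBlocks_fromBlocks₁₁, Matrix.toBlocks_fromBlocks₁₂] at k11 k12
    constructor
    · rw [← k11]; noncomm_ring
    · have h2 : B * P⁻¹ * Dᵀ = D * P⁻¹ * Bᵀ := by
        have hz : D * P⁻¹ * Bᵀ - B * P⁻¹ * Dᵀ = 0 := by rw [← k12]; noncomm_ring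
        exact (sub_eq_zero.mp hz).symm
      rw [← mul_assoc, ← mul_assoc, h2]
  obtain ⟨hi, hii⟩ := hkeys
  -- identities (iii) and (iv)
  have hiii : (Cᵀ * D + Aᵀ * B) * (P⁻¹ * Dᵀ) = Cᵀ + P⁻¹ * Bᵀ := by
    calc (Cᵀ * D + Aᵀ * B) * (P⁻¹ * Dᵀ)
        = Cᵀ * (D * (P⁻¹ * Dᵀ)) + Aᵀ * (B * (P⁻¹ * Dᵀ)) := by noncomm_ring
      _ = Cᵀ * (D * (P⁻¹ * Dᵀ)) + Aᵀ * (D * (P⁻¹ * Bᵀ)) := by rw [hii]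
      _ = Cᵀ * (D * (P⁻¹ * Dᵀ) + B * (P⁻¹ * Bᵀ)) + (Aᵀ * D - Cᵀ * B) * (P⁻¹ * Bᵀ) := by
          noncomm_ring
      _ = Cᵀ + P⁻¹ * Bᵀ := by rw [hi, h3, mul_one, one_mul]
  have hiv : (Cᵀ * D + Aᵀ * B) * (P⁻¹ * Bᵀ) = Aᵀ - P⁻¹ * Dᵀ := by
    calc (Cᵀ * D + Aᵀ * B) * (P⁻¹ * Bᵀ)
        = Cᵀ * (D * (P⁻¹ * Bᵀ)) + Aᵀ * (B * (P⁻¹ * Bᵀ)) := by noncomm_ring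
      _ = Cᵀ * (B * (P⁻¹ * Dᵀ)) + Aᵀ * (B * (P⁻¹ * Bᵀ)) := by rw [hii]
      _ = Aᵀ * (D * (P⁻¹ * Dᵀ) + B * (P⁻¹ * Bᵀ)) - (Aᵀ * D - Cᵀ * B) * (P⁻¹ * Dᵀ) := by
          noncomm_ring
      _ = Aᵀ - P⁻¹ * Dᵀ := by rw [hi, h3, mul_one, one_mul]
  -- the unitary conditions in real form
  have hUU : (L⁻¹ * Dᵀ)ᵀ * (L⁻¹ * Dᵀ) + (L⁻¹ * Bᵀ)ᵀ * (L⁻¹ * Bᵀ) = 1 := by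
    rw [Matrix.transpose_mul, Matrix.transpose_mul, Matrix.transpose_transpose,
      Matrix.transpose_transpose, hLinvT]
    calc D * L⁻¹ * (L⁻¹ * Dᵀ) + B * L⁻¹ * (L⁻¹ * Bᵀ)
        = D * (L⁻¹ * L⁻¹ * Dᵀ) + B * (L⁻¹ * L⁻¹ * Bᵀ) := by noncomm_ring
      _ = 1 := by rw [hInv2]; exact hi
  have hUV : (L⁻¹ * Dᵀ)ᵀ * (L⁻¹ * Bᵀ) = (L⁻¹ * Bᵀ)ᵀ * (L⁻¹ * Dᵀ) := by
    rw [Matrix.transpose_mul, Matrix.transpose_mul, Matrix.transpose_transpose,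
      Matrix.transpose_transpose, hLinvT]
    calc D * L⁻¹ * (L⁻¹ * Bᵀ)
        = D * (L⁻¹ * L⁻¹ * Bᵀ) := by noncomm_ring
      _ = D * (P⁻¹ * Bᵀ) := by rw [hInv2]
      _ = B * (P⁻¹ * Dᵀ) := hii.symm
      _ = B * (L⁻¹ * L⁻¹ * Dᵀ) := by rw [hInv2]
      _ = B * L⁻¹ * (L⁻¹ * Dᵀ) := by noncomm_ring
  refine ⟨hP, L⁻¹ * Dᵀ, L⁻¹ * Bᵀ, ?_, ?_⟩
  · -- unitarity
    set U := L⁻¹ * Dᵀ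
    set V := L⁻¹ * Bᵀ
    have hstar : ∀ M : Matrix (Fin n) (Fin n) ℝ,
        star (M.map (Complex.ofReal)) = Mᵀ.map (Complex.ofReal) := by
      intro M; ext i j
      simp [Matrix.conjTranspose_apply, Matrix.map_apply, Complex.conj_ofReal]
    have hmap : ∀ M N : Matrix (Fin n) (Fin n) ℝ,
        (M.map (Complex.ofReal)) * (N.map (Complex.ofReal)) = (M * N).map (Complex.ofReal) :=
      fun M N => (Matrix.map_mul (f := Complex.ofRealHom)).symm
    have hone : (Uᵀ * U).map Complex.ofReal + (Vᵀ * V).map Complex.ofReal = 1 := by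
      rw [← Matrix.map_add _ (fun a b => Complex.ofReal_add a b), hUU,
        Matrix.map_one _ Complex.ofReal_zero Complex.ofReal_one]
    rw [star_add, star_smul, hstar, hstar, Complex.star_def, Complex.conj_I]
    rw [add_mul, mul_add, mul_add, smul_mul_assoc, smul_mul_assoc, mul_smul_comm, mul_smul_comm,
      hmap, hmap, hmap, hmap, hUV, smul_smul]
    have hII : -Complex.I * Complex.I = 1 := by simp [Complex.I_mul_I]
    rw [hII, one_smul, ← hone]
    module
  · -- the factorization
    have h3t : Dᵀ * A - Bᵀ * C = 1 := by
      have h := congrArg Matrix.transpose h3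
      rwa [Matrix.transpose_sub, Matrix.transpose_mul, Matrix.transpose_mul,
        Matrix.transpose_transpose, Matrix.transpose_transpose, Matrix.transpose_one] at h
    have hT : Matrix.fromBlocks Dᵀ (-Bᵀ) (-Cᵀ) Aᵀ * Matrix.fromBlocks A B C D = 1 := by
      rw [Matrix.fromBlocks_multiply]
      have b11 : Dᵀ * A + (-Bᵀ) * C = 1 := by rw [neg_mul, ← sub_eq_add_neg]; exact h3t
      have b12 : Dᵀ * B + (-Bᵀ) * D = 0 := by rw [neg_mul, ← sub_eq_add_neg, h1, sub_self]
      have b21 : (-Cᵀ) * A + Aᵀ * C = 0 := by rw [neg_mul, h11]; exact neg_add_cancel _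
      have b22 : (-Cᵀ) * B + Aᵀ * D = 1 := by rw [neg_mul, neg_add_eq_sub]; exact h3
      rw [b11, b12, b21, b22, Matrix.fromBlocks_one]
    rw [Matrix.inv_eq_left_inv hT, ← hLdef, Matrix.fromBlocks_multiply]
    have g11 : L * (L⁻¹ * Dᵀ) + 0 * (L⁻¹ * Bᵀ) = Dᵀ := by
      rw [zero_mul, add_zero, ← mul_assoc, hL1, one_mul]
    have g12 : L * (-(L⁻¹ * Bᵀ)) + 0 * (L⁻¹ * Dᵀ) = -Bᵀ := by
      rw [zero_mul, add_zero, mul_neg, ← mul_assoc, hL1, one_mul]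
    have g21 : (-(Cᵀ * D + Aᵀ * B) * L⁻¹) * (L⁻¹ * Dᵀ) + L⁻¹ * (L⁻¹ * Bᵀ) = -Cᵀ := by
      have e1 : (-(Cᵀ * D + Aᵀ * B) * L⁻¹) * (L⁻¹ * Dᵀ)
          = -((Cᵀ * D + Aᵀ * B) * (L⁻¹ * L⁻¹ * Dᵀ)) := by noncomm_ring
      have e2 : L⁻¹ * (L⁻¹ * Bᵀ) = L⁻¹ * L⁻¹ * Bᵀ := by noncomm_ring
      rw [e1, e2, hInv2, hiii]
      abel
    have g22 : (-(Cᵀ * D + Aᵀ * B) * L⁻¹) * (-(L⁻¹ * Bᵀ)) + L⁻¹ * (L⁻¹ * Dᵀ) = Aᵀ := by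
      have e1 : (-(Cᵀ * D + Aᵀ * B) * L⁻¹) * (-(L⁻¹ * Bᵀ))
          = (Cᵀ * D + Aᵀ * B) * (L⁻¹ * L⁻¹ * Bᵀ) := by noncomm_ring
      have e2 : L⁻¹ * (L⁻¹ * Dᵀ) = L⁻¹ * L⁻¹ * Dᵀ := by noncomm_ring
      rw [e1, e2, hInv2, hiv]
      abel
    rw [g11, g12, g21, g22]
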